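/- Let w be distributed according to the Mallows measure M_N^q with q ∈ [0,1), and let H_{L,K}(w) = #{i : 1 ≤ i ≤ L, 1 ≤ w(i) ≤ K} for 1 ≤ L,K ≤ N. Then for any s with max{L+K-N, 0} ≤ s ≤ min{L,K}, the probability that H_{L,K}(w) = s equals q^{(K-s)(L-s)} · (q;q)_K (q;q)_L (q;q)_{N-K} (q;q)_{N-L} / ((q;q)_s (q;q)_{K-s} (q;q)_{L-s} (q;q)_{N+s-K-L} (q;q)_N). -/

import Mathlib

open Finset

/-- The number of inversions of a permutation of `Fin N`. -/
def permInv {N : ℕ} (w : Equiv.Perm (Fin N)) : ℕ :=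
  (Finset.univ.filter (fun p : Fin N × Fin N => p.1 < p.2 ∧ w p.2 < w p.1)).card

/-- The q-Pochhammer symbol `(q;q)_n = ∏_{k=1}^n (1-q^k)`. -/
noncomputable def qPoch (q : ℝ) (n : ℕ) : ℝ := ∏ k ∈ Finset.range n, (1 - q ^ (k + 1))

/-- The height function `H_{L,K}(w) = #{i : 1 ≤ i ≤ L, 1 ≤ w(i) ≤ K}` (0-indexed). -/
def heightFn {N : ℕ} (L K : ℕ) (w : Equiv.Perm (Fin N)) : ℕ :=
  (Finset.univ.filter (fun i : Fin N => (i : ℕ) < L ∧ ((w i : ℕ)) < K)).card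

/-- Insert: w 0 = v, w (i.succ) = v.succAbove (e i). -/
def ins {n : ℕ} (v : Fin (n+1)) (e : Equiv.Perm (Fin n)) : Equiv.Perm (Fin (n+1)) :=
  (Fin.cycleRange v)⁻¹ * ((finSuccEquiv n).symm.permCongr e.optionCongr)

@[simp] lemma ins_zero {n : ℕ} (v : Fin (n+1)) (e : Equiv.Perm (Fin n)) :
    ins v e 0 = v := by
  simp only [ins, Equiv.Perm.mul_apply, Equiv.permCongr_apply, Equiv.symm_symm,
    finSuccEquiv_zero, finSuccEquiv_succ, Equiv.optionCongr_apply, Option.map_none,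
    Option.map_some, finSuccEquiv_symm_none, finSuccEquiv_symm_some, Equiv.Perm.inv_def,
    Fin.cycleRange_symm_zero, Fin.cycleRange_symm_succ]

@[simp] lemma ins_succ {n : ℕ} (v : Fin (n+1)) (e : Equiv.Perm (Fin n)) (i : Fin n) :
    ins v e i.succ = v.succAbove (e i) := by
  simp only [ins, Equiv.Perm.mul_apply, Equiv.permCongr_apply, Equiv.symm_symm,
    finSuccEquiv_zero, finSuccEquiv_succ, Equiv.optionCongr_apply, Option.map_none,
    Option.map_some, finSuccEquiv_symm_none, finSuccEquiv_symm_some, Equiv.Perm.inv_def,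
    Fin.cycleRange_symm_zero, Fin.cycleRange_symm_succ]

lemma ins_bijective {n : ℕ} :
    Function.Bijective (fun p : Fin (n+1) × Equiv.Perm (Fin n) => ins p.1 p.2) := by
  rw [Fintype.bijective_iff_injective_and_card]
  constructor
  · rintro ⟨v, e⟩ ⟨v', e'⟩ h
    simp only at h
    have hv : v = v' := by
      have := congrArg (fun w => w 0) h
      simpa using this
    subst hv
    have he : e = e' := by
      ext i
      have h2 := congrArg (fun w => w i.succ) h
      simp only [ins_succ] at h2
      exact congrArg Fin.val (Fin.succAbove_right_injective h2)
    simp [he]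
  · simp [Fintype.card_perm, Nat.factorial_succ]

lemma succAbove_val {n : ℕ} (v : Fin (n+1)) (x : Fin n) :
    ((v.succAbove x : Fin (n+1)) : ℕ) = if (x:ℕ) < (v:ℕ) then (x:ℕ) else (x:ℕ)+1 := by
  rcases lt_or_ge (x.castSucc) v with h | h
  · rw [Fin.succAbove_of_castSucc_lt _ _ h]
    simp [Fin.lt_def] at h
    simp [h]
  · rw [Fin.succAbove_of_le_castSucc _ _ h]
    simp [Fin.le_def] at h
    simp [Nat.not_lt.2 h]

lemma sum_range_ite_lt {M : Type*} [AddCommMonoid M] (n m : ℕ) (h : m ≤ n) (f : ℕ → M) :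
    (∑ i ∈ Finset.range n, if i < m then f i else 0) = ∑ i ∈ Finset.range m, f i := by
  rw [Finset.range_eq_Ico]
  rw [← Finset.sum_Ico_consecutive _ (Nat.zero_le m) h]
  have h1 : (∑ i ∈ Finset.Ico 0 m, if i < m then f i else 0) = ∑ i ∈ Finset.Ico 0 m, f i := by
    apply Finset.sum_congr rfl; intro x hx; simp at hx; simp [hx]
  have h2 : (∑ i ∈ Finset.Ico m n, if i < m then f i else 0) = 0 := by
    apply Finset.sum_eq_zero; intro x hx; simp at hx; simp [Nat.not_lt.2 hx.1]
  rw [h1, h2, add_zero, Finset.range_eq_Ico]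

lemma card_filter_lt {n m : ℕ} (h : m ≤ n) :
    ((univ : Finset (Fin n)).filter (fun y : Fin n => (y:ℕ) < m)).card = m := by
  rw [Finset.card_filter, Fin.sum_univ_eq_sum_range (fun i => if i < m then 1 else 0) n,
    sum_range_ite_lt n m h, Finset.sum_const, Finset.card_range, smul_eq_mul, mul_one]

lemma perm_card_lt {n : ℕ} (e : Equiv.Perm (Fin n)) (m : ℕ) (h : m ≤ n) :
    ((univ : Finset (Fin n)).filter (fun y : Fin n => ((e y : Fin n):ℕ) < m)).card = m := by
  have key : ((univ : Finset (Fin n)).filter (fun y : Fin n => ((e y : Fin n):ℕ) < m)).card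
      = ((univ : Finset (Fin n)).filter (fun y : Fin n => (y:ℕ) < m)).card := by
    apply Finset.card_nbij (fun y => e y)
    · intro a ha; simp_all
    · intro a ha b hb hab; exact e.injective hab
    · intro a ha; exact ⟨e.symm a, by simp_all⟩
  rw [key, card_filter_lt h]

lemma permInv_eq_sum {N : ℕ} (w : Equiv.Perm (Fin N)) :
    permInv w = ∑ i : Fin N, ∑ j : Fin N, if i < j ∧ w j < w i then 1 else 0 := by
  rw [permInv, Finset.card_filter, Fintype.sum_prod_type]

lemma perm_sum_lt {n : ℕ} (e : Equiv.Perm (Fin n)) (m : ℕ) (h : m ≤ n) :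
    (∑ y : Fin n, if ((e y : Fin n) : ℕ) < m then 1 else 0) = m := by
  rw [← Finset.card_filter]
  exact perm_card_lt e m h

lemma permInv_ins {n : ℕ} (v : Fin (n+1)) (e : Equiv.Perm (Fin n)) :
    permInv (ins v e) = (v:ℕ) + permInv e := by
  rw [permInv_eq_sum, permInv_eq_sum, Fin.sum_univ_succ]
  have h0 : (∑ j : Fin (n+1), if (0 : Fin (n+1)) < j ∧ ins v e j < ins v e 0 then 1 else 0)
      = (v:ℕ) := by
    rw [Fin.sum_univ_succ]
    simp only [lt_self_iff_false, false_and, if_false, ins_zero, ins_succ, Fin.succ_pos,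
      true_and, Fin.succAbove_lt_iff_castSucc_lt, zero_add]
    have : ∀ k : Fin n, ((Fin.castSucc (e k) < v) = (((e k : Fin n):ℕ) < (v:ℕ))) := by
      intro k; simp [Fin.lt_def]
    simp only [this]
    exact perm_sum_lt e v (Fin.is_le v)
  have h1 : ∀ k : Fin n,
      (∑ j : Fin (n+1), if k.succ < j ∧ ins v e j < ins v e k.succ then 1 else 0)
      = ∑ j : Fin n, if k < j ∧ e j < e k then 1 else 0 := by
    intro k
    rw [Fin.sum_univ_succ]
    simp [ins_succ, ins_zero, Fin.succ_lt_succ_iff, Fin.succAbove_lt_succAbove_iff,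
      Fin.not_lt_zero]
  rw [h0]
  congr 1
  exact Finset.sum_congr rfl (fun k _ => h1 k)

lemma height_ins_lt {n l K : ℕ} (v : Fin (n+1)) (e : Equiv.Perm (Fin n))
    (hv : (v:ℕ) < K) :
    heightFn (l+1) K (ins v e) = 1 + heightFn l (K-1) e := by
  rw [heightFn, heightFn, Finset.card_filter, Finset.card_filter, Fin.sum_univ_succ]
  simp only [ins_zero, ins_succ, Fin.val_zero, Fin.val_succ]
  rw [if_pos ⟨Nat.succ_pos l, hv⟩]
  congr 1
  apply Finset.sum_congr rfl
  intro i _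
  rw [succAbove_val]
  rcases lt_or_ge ((e i : Fin n):ℕ) ((v:Fin (n+1)):ℕ) with h | h
  · rw [if_pos h]; exact if_congr (by omega) rfl rfl
  · rw [if_neg (Nat.not_lt.2 h)]; exact if_congr (by omega) rfl rfl

lemma height_ins_ge {n l K : ℕ} (v : Fin (n+1)) (e : Equiv.Perm (Fin n))
    (hv : ¬ (v:ℕ) < K) :
    heightFn (l+1) K (ins v e) = heightFn l K e := by
  rw [heightFn, heightFn, Finset.card_filter, Finset.card_filter, Fin.sum_univ_succ]
  simp only [ins_zero, ins_succ, Fin.val_zero, Fin.val_succ]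
  rw [if_neg (by exact fun h => hv h.2), zero_add]
  apply Finset.sum_congr rfl
  intro i _
  rw [succAbove_val]
  rcases lt_or_ge ((e i : Fin n):ℕ) ((v:Fin (n+1)):ℕ) with h | h
  · rw [if_pos h]; exact if_congr (by omega) rfl rfl
  · rw [if_neg (Nat.not_lt.2 h)]; exact if_congr (by omega) rfl rfl

lemma height_le {N L K : ℕ} (w : Equiv.Perm (Fin N)) : heightFn L K w ≤ L := by
  rw [heightFn]
  calc (univ.filter (fun i : Fin N => (i : ℕ) < L ∧ ((w i : Fin N) : ℕ) < K)).card
      ≤ (Finset.range L).card := by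
        refine Finset.card_le_card_of_injOn (fun x : Fin N => (x:ℕ)) ?_ ?_
        · intro a ha; simp at ha; simp [ha.1]
        · intro a _ b _ hab; exact Fin.val_injective hab
    _ = L := Finset.card_range L

lemma sum_ins {n : ℕ} (f : Equiv.Perm (Fin (n+1)) → ℝ) :
    ∑ w : Equiv.Perm (Fin (n+1)), f w
      = ∑ v : Fin (n+1), ∑ e : Equiv.Perm (Fin n), f (ins v e) := by
  have h1 : ∑ p : Fin (n+1) × Equiv.Perm (Fin n), f (ins p.1 p.2) = ∑ w, f w :=
    Fintype.sum_bijective _ ins_bijective _ f (fun p => rfl)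
  rw [← h1, Fintype.sum_prod_type]

lemma geom_fin (q : ℝ) (hq : q ≠ 1) (n : ℕ) :
    ∑ v : Fin n, q^(v:ℕ) = (1 - q^n)/(1 - q) := by
  rw [Fin.sum_univ_eq_sum_range (fun i => q^i) n, geom_sum_eq hq,
    show (1-q^n) = -(q^n-1) by ring, show (1-q) = -(q-1) by ring, neg_div_neg_eq]

lemma sum_all (q : ℝ) (hq : q ≠ 1) :
    ∀ n, ∑ w : Equiv.Perm (Fin n), q^(permInv w) = ∏ j ∈ Finset.range n, (1 - q^(j+1))/(1-q) := by
  intro n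
  induction n with
  | zero =>
    rw [Finset.range_zero, Finset.prod_empty]
    have h0 : ∀ w : Equiv.Perm (Fin 0), permInv w = 0 := by
      intro w; rw [permInv]; simp
    simp only [h0, pow_zero]
    rw [Finset.sum_const]
    simp [Finset.card_univ]
  | succ n ih =>
    rw [sum_ins (fun w => q^(permInv w))]
    calc ∑ v : Fin (n+1), ∑ e : Equiv.Perm (Fin n), q ^ permInv (ins v e)
        = ∑ v : Fin (n+1), ∑ e : Equiv.Perm (Fin n), q^(v:ℕ) * q^(permInv e) := by
          apply Finset.sum_congr rfl; intro v _
          apply Finset.sum_congr rfl; intro e _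
          rw [permInv_ins, pow_add]
      _ = (∑ v : Fin (n+1), q^(v:ℕ)) * (∑ e : Equiv.Perm (Fin n), q^(permInv e)) := by
          rw [Finset.sum_mul_sum]
      _ = ∏ j ∈ Finset.range (n+1), (1 - q^(j+1))/(1-q) := by
          rw [geom_fin q hq, ih, Finset.prod_range_succ, mul_comm]

lemma step (q : ℝ) (n l K s : ℕ) :
    (∑ w : Equiv.Perm (Fin (n+1)), if heightFn (l+1) K w = s then q^(permInv w) else 0)
    = (∑ v ∈ (univ : Finset (Fin (n+1))).filter (fun v : Fin (n+1) => (v:ℕ) < K), q^(v:ℕ))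
        * (∑ e : Equiv.Perm (Fin n), if 1 + heightFn l (K-1) e = s then q^(permInv e) else 0)
    + (∑ v ∈ (univ : Finset (Fin (n+1))).filter (fun v : Fin (n+1) => ¬ (v:ℕ) < K), q^(v:ℕ))
        * (∑ e : Equiv.Perm (Fin n), if heightFn l K e = s then q^(permInv e) else 0) := by
  rw [sum_ins (fun w => if heightFn (l+1) K w = s then q^(permInv w) else 0)]
  rw [← Finset.sum_filter_add_sum_filter_not univ (fun v : Fin (n+1) => (v:ℕ) < K)]
  congr 1
  · rw [Finset.sum_mul]
    apply Finset.sum_congr rfl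
    intro v hv
    simp only [Finset.mem_filter] at hv
    rw [Finset.mul_sum]
    apply Finset.sum_congr rfl
    intro e _
    rw [height_ins_lt v e hv.2, permInv_ins, pow_add]
    split_ifs with h
    · rfl
    · rw [mul_zero]
  · rw [Finset.sum_mul]
    apply Finset.sum_congr rfl
    intro v hv
    simp only [Finset.mem_filter] at hv
    rw [Finset.mul_sum]
    apply Finset.sum_congr rfl
    intro e _
    rw [height_ins_ge v e hv.2, permInv_ins, pow_add]
    split_ifs with h
    · rfl
    · rw [mul_zero]

lemma coef_lt (q : ℝ) (hq : q ≠ 1) {n K : ℕ} (h : K ≤ n) :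
    ∑ v ∈ (univ : Finset (Fin n)).filter (fun v : Fin n => (v:ℕ) < K), q^(v:ℕ)
      = (1 - q^K)/(1 - q) := by
  rw [Finset.sum_filter, Fin.sum_univ_eq_sum_range (fun i => if i < K then q^i else 0) n,
    sum_range_ite_lt n K h (fun i => q^i), geom_sum_eq hq,
    show (1-q^K) = -(q^K-1) by ring, show (1-q) = -(q-1) by ring, neg_div_neg_eq]

lemma coef_ge (q : ℝ) (hq : q ≠ 1) {n K : ℕ} (h : K ≤ n) :
    ∑ v ∈ (univ : Finset (Fin n)).filter (fun v : Fin n => ¬ (v:ℕ) < K), q^(v:ℕ)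
      = (q^K - q^n)/(1 - q) := by
  have h1 := Finset.sum_filter_add_sum_filter_not (univ : Finset (Fin n))
    (fun v : Fin n => (v:ℕ) < K) (fun v : Fin n => q^(v:ℕ))
  rw [coef_lt q hq h] at h1
  rw [geom_fin q hq n] at h1
  have : (q^K - q^n)/(1-q) = (1 - q^n)/(1-q) - (1 - q^K)/(1-q) := by
    rw [div_sub_div_same]; ring_nf
  rw [this, ← h1]; ring

lemma qPoch_zero (q : ℝ) : qPoch q 0 = 1 := by simp [qPoch]

lemma qPoch_succ (q : ℝ) (m : ℕ) : qPoch q (m+1) = qPoch q m * (1 - q^(m+1)) := by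
  rw [qPoch, qPoch, Finset.prod_range_succ]

lemma one_sub_pow_pos {q : ℝ} (hq0 : 0 ≤ q) (hq1 : q < 1) (m : ℕ) :
    0 < 1 - q^(m+1) := by
  have : q^(m+1) < 1 := pow_lt_one₀ hq0 hq1 (Nat.succ_ne_zero m)
  linarith

lemma qPoch_pos {q : ℝ} (hq0 : 0 ≤ q) (hq1 : q < 1) (m : ℕ) : 0 < qPoch q m := by
  rw [qPoch]
  exact Finset.prod_pos (fun k _ => one_sub_pow_pos hq0 hq1 k)

lemma qPoch_ne {q : ℝ} (hq0 : 0 ≤ q) (hq1 : q < 1) (m : ℕ) : qPoch q m ≠ 0 :=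
  ne_of_gt (qPoch_pos hq0 hq1 m)

lemma height_zero {N K : ℕ} (w : Equiv.Perm (Fin N)) : heightFn 0 K w = 0 := by
  rw [heightFn]
  simp

lemma sum_all' (q : ℝ) (hq0 : 0 ≤ q) (hq1 : q < 1) (N : ℕ) :
    ∑ w : Equiv.Perm (Fin N), q^(permInv w) = qPoch q N / (1-q)^N := by
  rw [sum_all q (ne_of_lt hq1) N, Finset.prod_div_distrib, Finset.prod_const,
    Finset.card_range, qPoch]

lemma sum_ite_congr {α : Type*} [Fintype α] (P Q : α → Prop) [DecidablePred P]
    [DecidablePred Q] (h : ∀ x, P x ↔ Q x) (f : α → ℝ) :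
    (∑ x : α, if P x then f x else 0) = ∑ x : α, if Q x then f x else 0 :=
  Finset.sum_congr rfl fun x _ => if_congr (h x) rfl rfl

lemma aux_zero (q : ℝ) (hq0 : 0 ≤ q) (hq1 : q < 1) (b d N : ℕ) (hN : N = 0+b+0+d) :
    (∑ w : Equiv.Perm (Fin N), if heightFn (0+0) (0+b) w = 0 then q^(permInv w) else 0)
      = q^(b*0) * (qPoch q (0+b) * qPoch q (0+0) * qPoch q (0+d) * qPoch q (b+d)) /
        (qPoch q 0 * qPoch q b * qPoch q 0 * qPoch q d * (1-q)^N) := by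
  simp only [Nat.zero_add, Nat.add_zero, Nat.mul_zero, pow_zero, qPoch_zero]
  have h1 : ∀ w : Equiv.Perm (Fin N), heightFn 0 b w = 0 := fun w => height_zero w
  rw [sum_ite_congr _ (fun _ => True) (fun w => by simp [h1 w]) _]
  simp only [if_true]
  rw [sum_all' q hq0 hq1 N]
  have hbd : b + d = N := by omega
  rw [← hbd]
  have n1 : qPoch q b ≠ 0 := qPoch_ne hq0 hq1 b
  have n2 : qPoch q d ≠ 0 := qPoch_ne hq0 hq1 d
  have n3 : ((1:ℝ)-q)^(b+d) ≠ 0 := pow_ne_zero _ (by linarith [hq1])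
  field_simp

set_option maxHeartbeats 2000000 in
lemma aux (q : ℝ) (hq0 : 0 ≤ q) (hq1 : q < 1) :
    ∀ M a b c d N, a + c ≤ M → N = a + b + c + d →
    (∑ w : Equiv.Perm (Fin N), if heightFn (a+c) (a+b) w = a then q^(permInv w) else 0)
      = q^(b*c) * (qPoch q (a+b) * qPoch q (a+c) * qPoch q (c+d) * qPoch q (b+d)) /
        (qPoch q a * qPoch q b * qPoch q c * qPoch q d * (1-q)^N) := by
  have hq : q ≠ 1 := ne_of_lt hq1
  have h1q : (1:ℝ) - q ≠ 0 := by linarith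
  intro M
  induction M with
  | zero =>
    intro a b c d N h1 h2
    obtain rfl : a = 0 := by omega
    obtain rfl : c = 0 := by omega
    exact aux_zero q hq0 hq1 b d N h2
  | succ M ih =>
    intro a b c d N h1 h2
    by_cases h0 : a + c = 0
    · obtain rfl : a = 0 := by omega
      obtain rfl : c = 0 := by omega
      exact aux_zero q hq0 hq1 b d N h2
    · subst h2
      obtain ⟨n, hn⟩ : ∃ n, a + b + c + d = n + 1 := ⟨a+b+c+d-1, by omega⟩
      rw [hn]
      obtain ⟨l, hl⟩ : ∃ l, a + c = l + 1 := ⟨a+c-1, by omega⟩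
      rw [hl, step q n l (a+b) a]
      rw [coef_lt q hq (show a+b ≤ n+1 by omega), coef_ge q hq (show a+b ≤ n+1 by omega)]
      rcases a with _ | a'
      · -- a = 0, c = l + 1
        have hc : c = l + 1 := by omega
        have hS1 : (∑ e : Equiv.Perm (Fin n), if 1 + heightFn l (0+b-1) e = 0
            then q^(permInv e) else 0) = 0 :=
          Finset.sum_eq_zero (fun e _ => by rw [if_neg (by omega)])
        rw [hS1, mul_zero, zero_add]
        have e2 := ih 0 b l d n (by omega) (by omega)
        simp only [Nat.zero_add] at e2 ⊢
        rw [e2]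
        subst hc
        -- algebra
        have k1 : ∀ m : ℕ, (1:ℝ) - q^(m+1) ≠ 0 := fun m => ne_of_gt (one_sub_pow_pos hq0 hq1 m)
        have p1 : qPoch q b ≠ 0 := qPoch_ne hq0 hq1 b
        have p2 : qPoch q d ≠ 0 := qPoch_ne hq0 hq1 d
        have p3 : qPoch q l ≠ 0 := qPoch_ne hq0 hq1 l
        have p4 : qPoch q (l+1) ≠ 0 := qPoch_ne hq0 hq1 (l+1)
        have p5 : ((1:ℝ)-q)^n ≠ 0 := pow_ne_zero _ h1q
        have p6 : qPoch q (l+d) ≠ 0 := qPoch_ne hq0 hq1 (l+d)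
        obtain rfl : n = b + l + d := by omega
        have k2 : (1:ℝ) - q^(l+1) ≠ 0 := k1 l
        have k3 : (1:ℝ) - q^(l+d+1) ≠ 0 := k1 (l+d)
        rw [qPoch_succ q l, show l+1+d = (l+d)+1 by omega, qPoch_succ q (l+d), qPoch_zero]
        field_simp
        ring
      · -- a = a' + 1
        have hla : l = a' + c := by omega
        have hK : a'+1+b-1 = a'+b := by omega
        rw [hK]
        have hS1 : (∑ e : Equiv.Perm (Fin n), if 1 + heightFn l (a'+b) e = a'+1
            then q^(permInv e) else 0)
            = ∑ e : Equiv.Perm (Fin n), if heightFn (a'+c) (a'+b) e = a'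
            then q^(permInv e) else 0 := by
          subst hla
          exact sum_ite_congr _ _ (fun e => by omega) _
        rw [hS1, ih a' b c d n (by omega) (by omega)]
        have k1 : ∀ m : ℕ, (1:ℝ) - q^(m+1) ≠ 0 := fun m => ne_of_gt (one_sub_pow_pos hq0 hq1 m)
        rcases c with _ | c'
        · -- c = 0 : second sum vanishes
          have hS2 : (∑ e : Equiv.Perm (Fin n), if heightFn l (a'+1+b) e = a'+1
              then q^(permInv e) else 0) = 0 := by
            apply Finset.sum_eq_zero
            intro e _
            rw [if_neg]
            have := height_le (L := l) (K := a'+1+b) e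
            omega
          rw [hS2, mul_zero, add_zero]
          rw [hla]
          -- algebra
          have p1 : qPoch q a' ≠ 0 := qPoch_ne hq0 hq1 a'
          have p2 : qPoch q b ≠ 0 := qPoch_ne hq0 hq1 b
          have p3 : qPoch q d ≠ 0 := qPoch_ne hq0 hq1 d
          have p4 : qPoch q (a'+b) ≠ 0 := qPoch_ne hq0 hq1 (a'+b)
          have p5 : ((1:ℝ)-q)^n ≠ 0 := pow_ne_zero _ h1q
          have p6 : qPoch q (b+d) ≠ 0 := qPoch_ne hq0 hq1 (b+d)
          simp only [Nat.add_zero] at *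
          obtain rfl : n = a' + b + d := by omega
          have k2 : (1:ℝ) - q^(a'+1) ≠ 0 := k1 a'
          have k3 : (1:ℝ) - q^(a'+b+1) ≠ 0 := k1 (a'+b)
          rw [qPoch_succ q a', show a'+1+b = (a'+b)+1 by omega, qPoch_succ q (a'+b),
            qPoch_zero]
          field_simp
          ring
        · -- c = c' + 1
          have hlc : l = a'+1+c' := by omega
          have hS2 : (∑ e : Equiv.Perm (Fin n), if heightFn l (a'+1+b) e = a'+1
              then q^(permInv e) else 0)
              = ∑ e : Equiv.Perm (Fin n), if heightFn (a'+1+c') (a'+1+b) e = a'+1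
              then q^(permInv e) else 0 := by
            subst hlc
            rfl
          rw [hS2, ih (a'+1) b c' d n (by omega) (by omega)]
          subst hlc
          -- algebra
          have p1 : qPoch q a' ≠ 0 := qPoch_ne hq0 hq1 a'
          have p2 : qPoch q b ≠ 0 := qPoch_ne hq0 hq1 b
          have p3 : qPoch q c' ≠ 0 := qPoch_ne hq0 hq1 c'
          have p4 : qPoch q d ≠ 0 := qPoch_ne hq0 hq1 d
          have p5 : ((1:ℝ)-q)^n ≠ 0 := pow_ne_zero _ h1q
          have p6 : qPoch q (a'+b) ≠ 0 := qPoch_ne hq0 hq1 (a'+b)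
          have p7 : qPoch q (a'+c') ≠ 0 := qPoch_ne hq0 hq1 (a'+c')
          have p8 : qPoch q (c'+d) ≠ 0 := qPoch_ne hq0 hq1 (c'+d)
          have p9 : qPoch q (b+d) ≠ 0 := qPoch_ne hq0 hq1 (b+d)
          obtain rfl : n = a' + b + c' + d + 1 := by omega
          rw [show a'+1+b = (a'+b)+1 by omega, qPoch_succ q (a'+b),
            show a'+1+c'+1 = ((a'+c')+1)+1 by omega, qPoch_succ q ((a'+c')+1),
            qPoch_succ q (a'+c'),
            show c'+1+d = (c'+d)+1 by omega, qPoch_succ q (c'+d),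
            qPoch_succ q a', qPoch_succ q c',
            show a'+(c'+1) = (a'+c')+1 by omega,
            show a'+1+c' = (a'+c')+1 by omega, qPoch_succ q (a'+c')]
          have k2 : (1:ℝ) - q^(a'+1) ≠ 0 := k1 a'
          have k3 : (1:ℝ) - q^(c'+1) ≠ 0 := k1 c'
          have k4 : (1:ℝ) - q^(a'+b+1) ≠ 0 := k1 (a'+b)
          have k5 : (1:ℝ) - q^(a'+c'+1) ≠ 0 := k1 (a'+c')
          have k6 : (1:ℝ) - q^(a'+c'+1+1) ≠ 0 := k1 (a'+c'+1)
          have k7 : (1:ℝ) - q^(c'+d+1) ≠ 0 := k1 (c'+d)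
          field_simp
          ring


/-- Exact distribution of the height function of the Mallows measure:
`Prob(H_{L,K} = s) = q^{(K-s)(L-s)} (q;q)_K (q;q)_L (q;q)_{N-K} (q;q)_{N-L} /
((q;q)_s (q;q)_{K-s} (q;q)_{L-s} (q;q)_{N+s-K-L} (q;q)_N)`. -/
theorem mallows_height_distribution (N L K s : ℕ) (q : ℝ) (hq0 : 0 ≤ q) (hq1 : q < 1)
    (hL1 : 1 ≤ L) (hLN : L ≤ N) (hK1 : 1 ≤ K) (hKN : K ≤ N)
    (hsK : s ≤ K) (hsL : s ≤ L) (hs : L + K ≤ N + s) :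
    (∑ w ∈ Finset.univ.filter (fun w : Equiv.Perm (Fin N) => heightFn L K w = s),
        q ^ permInv w * ∏ j ∈ Finset.range N, (1 - q) / (1 - q ^ (j + 1)))
      = q ^ ((K - s) * (L - s)) *
        (qPoch q K * qPoch q L * qPoch q (N - K) * qPoch q (N - L)) /
        (qPoch q s * qPoch q (K - s) * qPoch q (L - s) * qPoch q (N + s - K - L) *
          qPoch q N) := by
  obtain ⟨b, rfl⟩ : ∃ b, K = s + b := ⟨K - s, by omega⟩
  obtain ⟨c, rfl⟩ : ∃ c, L = s + c := ⟨L - s, by omega⟩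
  obtain ⟨d, rfl⟩ : ∃ d, N = s + b + c + d := ⟨N - s - b - c, by omega⟩
  simp only [show s+b-s = b from by omega, show s+c-s = c from by omega,
    show s+b+c+d-(s+b) = c+d from by omega, show s+b+c+d-(s+c) = b+d from by omega,
    show s+b+c+d+s-(s+b)-(s+c) = d from by omega]
  rw [← Finset.sum_mul, Finset.sum_filter,
    aux q hq0 hq1 (s+c) s b c d (s+b+c+d) (le_refl (s+c)) rfl]
  have hZ : (∏ j ∈ Finset.range (s+b+c+d), (1-q)/(1-q^(j+1)))
      = (1-q)^(s+b+c+d) / qPoch q (s+b+c+d) := by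
    rw [Finset.prod_div_distrib, Finset.prod_const, Finset.card_range, qPoch]
  rw [hZ]
  have p0 : ((1:ℝ)-q)^(s+b+c+d) ≠ 0 := pow_ne_zero _ (by linarith)
  have p1 : qPoch q s ≠ 0 := qPoch_ne hq0 hq1 s
  have p2 : qPoch q b ≠ 0 := qPoch_ne hq0 hq1 b
  have p3 : qPoch q c ≠ 0 := qPoch_ne hq0 hq1 c
  have p4 : qPoch q d ≠ 0 := qPoch_ne hq0 hq1 d
  have p5 : qPoch q (s+b+c+d) ≠ 0 := qPoch_ne hq0 hq1 (s+b+c+d)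
  field_simp
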